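/- For every integer k ≥ 1 and every smooth f : ℝ × ℝ^{n+1} → ℝ one has, identically, Δ̃^k(Q·f) − Q·Δ̃^k f = −2k·Δ̃^{k−1}( 2·Xf + (n+4−2k)·f ). -/

import Mathlib

/-- The flat Fefferman–Graham ambient space `ℝ × ℝ^{n+1}` of the standard conformal
`n`-sphere, with coordinates `(t, x⁰, …, xⁿ)`. -/
abbrev Amb (n : ℕ) : Type := ℝ × (Fin (n+1) → ℝ)

/-- The partial derivative `∂_t`. -/
noncomputable def ptD {n : ℕ} (f : Amb n → ℝ) (p : Amb n) : ℝ :=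
  fderiv ℝ f p (1, 0)

/-- The partial derivative `∂_{xⁱ}`. -/
noncomputable def pxD {n : ℕ} (i : Fin (n+1)) (f : Amb n → ℝ) (p : Amb n) : ℝ :=
  fderiv ℝ f p (0, Pi.single i 1)

/-- The flat ambient Laplacian `Δ̃f = ∂_t²f − Σᵢ ∂_{xⁱ}²f` (convention `Δ ≥ 0` for the
metric `g̃ = −dt² + Σᵢ (dxⁱ)²`). -/
noncomputable def LapA {n : ℕ} (f : Amb n → ℝ) : Amb n → ℝ :=
  fun p => ptD (fun q => ptD f q) p - ∑ i, pxD i (fun q => pxD i f q) p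

/-- The Euler (dilation) operator `Xf = t∂_t f + Σᵢ xⁱ∂_{xⁱ} f`. -/
noncomputable def EulerA {n : ℕ} (f : Amb n → ℝ) (p : Amb n) : ℝ :=
  p.1 * ptD f p + ∑ i, p.2 i * pxD i f p

/-- The function `Q(t,x) = |x|² − t²`. -/
def QA {n : ℕ} (p : Amb n) : ℝ := (∑ i, (p.2 i)^2) - p.1^2

/-- The half-space `{(t,x) : t > 0}`. -/
def HS (n : ℕ) : Set (Amb n) := {p | 0 < p.1}

noncomputable def Dv {n : ℕ} (v : Amb n) (f : Amb n → ℝ) (p : Amb n) : ℝ := fderiv ℝ f p v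

lemma top1 : ((⊤:ℕ∞) : WithTop ℕ∞) + 1 ≤ ((⊤:ℕ∞) : WithTop ℕ∞) := by
  norm_cast
lemma top2 : ((⊤:ℕ∞) : WithTop ℕ∞) ≠ 0 := by
  simp

lemma Dv_smooth {n : ℕ} (v : Amb n) {f : Amb n → ℝ} (hf : ContDiff ℝ (⊤:ℕ∞) f) :
    ContDiff ℝ (⊤:ℕ∞) (Dv v f) :=
  (hf.fderiv_right top1).clm_apply contDiff_const

lemma Dv_diff {n : ℕ} (v : Amb n) {f : Amb n → ℝ} (hf : ContDiff ℝ (⊤:ℕ∞) f) :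
    Differentiable ℝ (Dv v f) := (Dv_smooth v hf).differentiable top2

lemma diff_of_smooth {n : ℕ} {f : Amb n → ℝ} (hf : ContDiff ℝ (⊤:ℕ∞) f) :
    Differentiable ℝ f := hf.differentiable top2

lemma Dv_add {n : ℕ} (v : Amb n) {f g : Amb n → ℝ} (hf : Differentiable ℝ f)
    (hg : Differentiable ℝ g) (p : Amb n) :
    Dv v (fun q => f q + g q) p = Dv v f p + Dv v g p := by
  unfold Dv; rw [fderiv_fun_add (hf p) (hg p)]; rfl

lemma Dv_mul {n : ℕ} (v : Amb n) {f g : Amb n → ℝ} (hf : Differentiable ℝ f)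
    (hg : Differentiable ℝ g) (p : Amb n) :
    Dv v (fun q => f q * g q) p = Dv v f p * g p + f p * Dv v g p := by
  unfold Dv; rw [fderiv_fun_mul (hf p) (hg p)]
  simp [mul_comm]
  ring

lemma Dv_const_mul {n : ℕ} (v : Amb n) (c : ℝ) {f : Amb n → ℝ} (hf : Differentiable ℝ f)
    (p : Amb n) : Dv v (fun q => c * f q) p = c * Dv v f p := by
  unfold Dv; rw [fderiv_const_mul (hf p)]; rfl

lemma Dv_fst {n : ℕ} (v : Amb n) (p : Amb n) : Dv v (fun q : Amb n => q.1) p = v.1 := by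
  unfold Dv
  rw [(hasFDerivAt_fst (𝕜 := ℝ)).fderiv]
  rfl

lemma Dv_coord {n : ℕ} (v : Amb n) (i : Fin (n+1)) (p : Amb n) :
    Dv v (fun q : Amb n => q.2 i) p = v.2 i := by
  unfold Dv
  have : (fun q : Amb n => q.2 i) = ⇑((ContinuousLinearMap.proj i).comp (ContinuousLinearMap.snd ℝ ℝ (Fin (n+1) → ℝ))) := rfl
  rw [this, ContinuousLinearMap.fderiv]
  rfl

lemma Dv_swap {n : ℕ} (v w : Amb n) {f : Amb n → ℝ} (hf : ContDiff ℝ (⊤:ℕ∞) f) (p : Amb n) :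
    Dv v (Dv w f) p = Dv w (Dv v f) p := by
  have hdf : ContDiff ℝ (⊤:ℕ∞) (fderiv ℝ f) := hf.fderiv_right top1
  have key : ∀ u z : Amb n, Dv u (Dv z f) p = fderiv ℝ (fderiv ℝ f) p u z := by
    intro u z
    unfold Dv
    rw [fderiv_clm_apply (hdf.differentiable top2 p) (differentiableAt_const z)]
    simp
  rw [key, key]
  exact second_derivative_symmetric (fun y => ((hf.differentiable top2) y).hasFDerivAt)
    ((hdf.differentiable top2 p).hasFDerivAt) v w

noncomputable def e0 (n : ℕ) : Amb n := ((1:ℝ), (0 : Fin (n+1) → ℝ))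
noncomputable def ex {n : ℕ} (i : Fin (n+1)) : Amb n := ((0:ℝ), Pi.single i (1:ℝ))

lemma ptD_eq {n : ℕ} (f : Amb n → ℝ) : ptD f = Dv (e0 n) f := rfl
lemma pxD_eq {n : ℕ} (i : Fin (n+1)) (f : Amb n → ℝ) : pxD i f = Dv (ex i) f := rfl

lemma LapA_eq {n : ℕ} (f : Amb n → ℝ) :
    LapA f = fun p => Dv (e0 n) (Dv (e0 n) f) p - ∑ i, Dv (ex i) (Dv (ex i) f) p := rfl

lemma EulerA_eq {n : ℕ} (f : Amb n → ℝ) :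
    EulerA f = fun p => p.1 * Dv (e0 n) f p + ∑ i, p.2 i * Dv (ex i) f p := rfl

-- smoothness of basic functions
lemma sm_fst {n : ℕ} : ContDiff ℝ (⊤:ℕ∞) (fun q : Amb n => q.1) := contDiff_fst

lemma smooth_coord {n : ℕ} (i : Fin (n+1)) : ContDiff ℝ (⊤:ℕ∞) (fun q : Amb n => q.2 i) :=
  ((ContinuousLinearMap.proj i).comp (ContinuousLinearMap.snd ℝ ℝ (Fin (n+1) → ℝ))).contDiff

lemma smooth_QA {n : ℕ} : ContDiff ℝ (⊤:ℕ∞) (QA (n := n)) := by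
  unfold QA
  exact (ContDiff.sum fun i _ => (smooth_coord i).pow 2).sub (sm_fst.pow 2)

lemma smooth_LapA {n : ℕ} {f : Amb n → ℝ} (hf : ContDiff ℝ (⊤:ℕ∞) f) :
    ContDiff ℝ (⊤:ℕ∞) (LapA f) := by
  rw [LapA_eq]
  exact (Dv_smooth _ (Dv_smooth _ hf)).sub
    (ContDiff.sum fun i _ => Dv_smooth _ (Dv_smooth _ hf))

lemma smooth_Euler {n : ℕ} {f : Amb n → ℝ} (hf : ContDiff ℝ (⊤:ℕ∞) f) :
    ContDiff ℝ (⊤:ℕ∞) (EulerA f) := by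
  rw [EulerA_eq]
  exact (sm_fst.mul (Dv_smooth _ hf)).add
    (ContDiff.sum fun i _ => (smooth_coord i).mul (Dv_smooth _ hf))

lemma smooth_iter {n : ℕ} (k : ℕ) {f : Amb n → ℝ} (hf : ContDiff ℝ (⊤:ℕ∞) f) :
    ContDiff ℝ (⊤:ℕ∞) (LapA^[k] f) := by
  induction k with
  | zero => exact hf
  | succ m ih => rw [Function.iterate_succ_apply']; exact smooth_LapA ih

-- more Dv lemmas
lemma Dv_sub {n : ℕ} (v : Amb n) {f g : Amb n → ℝ} (hf : Differentiable ℝ f)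
    (hg : Differentiable ℝ g) (p : Amb n) :
    Dv v (fun q => f q - g q) p = Dv v f p - Dv v g p := by
  unfold Dv; rw [fderiv_fun_sub (hf p) (hg p)]; rfl

lemma Dv_sum {n : ℕ} (v : Amb n) {ι : Type*} (s : Finset ι) {f : ι → Amb n → ℝ}
    (hf : ∀ i, Differentiable ℝ (f i)) (p : Amb n) :
    Dv v (fun q => ∑ i ∈ s, f i q) p = ∑ i ∈ s, Dv v (f i) p := by
  unfold Dv; rw [fderiv_fun_sum (fun i _ => hf i p)]
  exact ContinuousLinearMap.sum_apply _ _ _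

-- decomposition of a direction in the basis
lemma Dv_decomp {n : ℕ} (v : Amb n) {f : Amb n → ℝ} (p : Amb n) :
    Dv v f p = v.1 * Dv (e0 n) f p + ∑ i, v.2 i * Dv (ex i) f p := by
  have hv : v = v.1 • (e0 n) + ∑ i, v.2 i • ex i := by
    apply Prod.ext
    · simp [e0, ex, Prod.fst_sum]
    · funext j
      simp [e0, ex, Prod.snd_sum, Pi.single_apply]
  unfold Dv
  conv_lhs => rw [hv]
  rw [map_add, map_smul, map_sum]
  simp [smul_eq_mul]

lemma Dv_neg {n : ℕ} (v : Amb n) {f : Amb n → ℝ} (hf : Differentiable ℝ f) (p : Amb n) :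
    Dv v (fun q => -f q) p = -Dv v f p := by
  unfold Dv; rw [fderiv_fun_neg]; rfl

lemma Dv_QA {n : ℕ} (v : Amb n) (p : Amb n) :
    Dv v QA p = (∑ i, 2 * p.2 i * v.2 i) - 2 * p.1 * v.1 := by
  have hQ : QA (n := n) = fun q => (∑ i, (fun q : Amb n => q.2 i * q.2 i) q) - q.1 * q.1 := by
    funext q; simp [QA, sq]
  rw [hQ, Dv_sub v (Differentiable.fun_sum fun i _ =>
      (diff_of_smooth (smooth_coord i)).fun_mul (diff_of_smooth (smooth_coord i)))
      ((diff_of_smooth sm_fst).fun_mul (diff_of_smooth sm_fst)),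
    Dv_sum v _ (fun i => (diff_of_smooth (smooth_coord i)).fun_mul (diff_of_smooth (smooth_coord i))),
    Dv_mul v (diff_of_smooth sm_fst) (diff_of_smooth sm_fst) p]
  rw [Dv_fst]
  congr 1
  · apply Finset.sum_congr rfl
    intro i _
    rw [Dv_mul v (diff_of_smooth (smooth_coord i)) (diff_of_smooth (smooth_coord i)) p, Dv_coord]
    ring
  · ring

lemma Dv_e0_QA {n : ℕ} (p : Amb n) : Dv (e0 n) QA p = -(2 * p.1) := by
  rw [Dv_QA]; simp [e0]

lemma Dv_ex_QA {n : ℕ} (j : Fin (n+1)) (p : Amb n) : Dv (ex j) QA p = 2 * p.2 j := by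
  rw [Dv_QA]
  simp [ex, Pi.single_apply, mul_ite, Finset.sum_ite_eq']

lemma Dv2_e0_QA {n : ℕ} (p : Amb n) : Dv (e0 n) (Dv (e0 n) QA) p = -2 := by
  have h : Dv (e0 n) (QA (n := n)) = fun q => -(2 * q.1) := funext fun q => Dv_e0_QA q
  rw [h]
  have h2 : (fun q : Amb n => -(2 * q.1)) = fun q => -((fun q : Amb n => 2 * q.1) q) := rfl
  rw [h2, Dv_neg _ ((diff_of_smooth sm_fst).const_mul 2),
    Dv_const_mul _ 2 (diff_of_smooth sm_fst), Dv_fst]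
  simp [e0]

lemma Dv2_ex_QA {n : ℕ} (j : Fin (n+1)) (p : Amb n) : Dv (ex j) (Dv (ex j) QA) p = 2 := by
  have h : Dv (ex j) (QA (n := n)) = fun q => 2 * q.2 j := funext fun q => Dv_ex_QA j q
  rw [h, Dv_const_mul _ 2 (diff_of_smooth (smooth_coord j)), Dv_coord]
  simp [ex]

lemma Dv2_mul {n : ℕ} (v : Amb n) {g f : Amb n → ℝ} (hg : ContDiff ℝ (⊤:ℕ∞) g)
    (hf : ContDiff ℝ (⊤:ℕ∞) f) (p : Amb n) :
    Dv v (Dv v (fun q => g q * f q)) p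
      = Dv v (Dv v g) p * f p + 2 * (Dv v g p * Dv v f p) + g p * Dv v (Dv v f) p := by
  have h1 : Dv v (fun q => g q * f q) = fun q => Dv v g q * f q + g q * Dv v f q :=
    funext fun q => Dv_mul v (diff_of_smooth hg) (diff_of_smooth hf) q
  rw [h1, Dv_add v ((Dv_diff v hg).fun_mul (diff_of_smooth hf))
    ((diff_of_smooth hg).fun_mul (Dv_diff v hf)) p,
    Dv_mul v (Dv_diff v hg) (diff_of_smooth hf) p,
    Dv_mul v (diff_of_smooth hg) (Dv_diff v hf) p]
  ring

lemma Lap_mul_Q {n : ℕ} {f : Amb n → ℝ} (hf : ContDiff ℝ (⊤:ℕ∞) f) :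
    LapA (fun q => QA q * f q)
      = fun p => QA p * LapA f p - 2 * (2 * EulerA f p + ((n:ℝ) + 2) * f p) := by
  funext p
  rw [LapA_eq, LapA_eq, EulerA_eq]
  simp only
  rw [Dv2_mul (e0 n) smooth_QA hf p]
  have hx : ∀ i : Fin (n+1), Dv (ex i) (Dv (ex i) (fun q => QA q * f q)) p
      = Dv (ex i) (Dv (ex i) QA) p * f p + 2 * (Dv (ex i) QA p * Dv (ex i) f p)
        + QA p * Dv (ex i) (Dv (ex i) f) p := fun i => Dv2_mul (ex i) smooth_QA hf p
  rw [Finset.sum_congr rfl (fun i _ => hx i)]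
  rw [Dv2_e0_QA, Dv_e0_QA]
  have : ∀ i : Fin (n+1), Dv (ex i) (Dv (ex i) QA) p * f p
      + 2 * (Dv (ex i) QA p * Dv (ex i) f p) + QA p * Dv (ex i) (Dv (ex i) f) p
      = 2 * f p + 4 * (p.2 i * Dv (ex i) f p) + QA p * Dv (ex i) (Dv (ex i) f) p := by
    intro i; rw [Dv2_ex_QA, Dv_ex_QA]; ring
  rw [Finset.sum_congr rfl (fun i _ => this i)]
  rw [Finset.sum_add_distrib, Finset.sum_add_distrib, Finset.sum_const, Finset.card_univ,
    Fintype.card_fin, ← Finset.mul_sum, ← Finset.mul_sum, nsmul_eq_mul]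
  push_cast
  ring

lemma Dv_Euler {n : ℕ} (v : Amb n) {f : Amb n → ℝ} (hf : ContDiff ℝ (⊤:ℕ∞) f) :
    Dv v (EulerA f) = fun q => Dv v f q + EulerA (Dv v f) q := by
  funext q
  rw [EulerA_eq, EulerA_eq]
  have hterm : ∀ i : Fin (n+1), Differentiable ℝ (fun q : Amb n => q.2 i * Dv (ex i) f q) :=
    fun i => (diff_of_smooth (smooth_coord i)).mul (Dv_diff _ hf)
  rw [Dv_add v ((diff_of_smooth sm_fst).fun_mul (Dv_diff _ hf))
      (Differentiable.fun_sum fun i _ => hterm i) q,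
    Dv_mul v (diff_of_smooth sm_fst) (Dv_diff _ hf) q, Dv_fst,
    Dv_sum v _ hterm q]
  have hsum : ∀ i : Fin (n+1), Dv v (fun q : Amb n => q.2 i * Dv (ex i) f q) q
      = v.2 i * Dv (ex i) f q + q.2 i * Dv (ex i) (Dv v f) q := by
    intro i
    rw [Dv_mul v (diff_of_smooth (smooth_coord i)) (Dv_diff _ hf) q, Dv_coord,
      Dv_swap v (ex i) hf q]
  rw [Finset.sum_congr rfl fun i _ => hsum i, Finset.sum_add_distrib,
    Dv_swap v (e0 n) hf q]
  have hdec := Dv_decomp v (f := f) q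
  simp only
  linarith [hdec]

lemma Dv2_Euler {n : ℕ} (v : Amb n) {f : Amb n → ℝ} (hf : ContDiff ℝ (⊤:ℕ∞) f) (p : Amb n) :
    Dv v (Dv v (EulerA f)) p
      = 2 * Dv v (Dv v f) p + EulerA (Dv v (Dv v f)) p := by
  rw [Dv_Euler v hf]
  rw [Dv_add v (Dv_diff v hf) (diff_of_smooth (smooth_Euler (Dv_smooth v hf))) p]
  have h2 := Dv_Euler v (Dv_smooth v hf)
  rw [h2]
  ring

lemma Euler_sub_sum {n : ℕ} {g : Amb n → ℝ} {h : Fin (n+1) → Amb n → ℝ}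
    (hg : ContDiff ℝ (⊤:ℕ∞) g) (hh : ∀ j, ContDiff ℝ (⊤:ℕ∞) (h j)) (p : Amb n) :
    EulerA (fun q => g q - ∑ j, h j q) p = EulerA g p - ∑ j, EulerA (h j) p := by
  rw [EulerA_eq, EulerA_eq]
  simp only
  have hd : ∀ v : Amb n, Dv v (fun q => g q - ∑ j, h j q) p
      = Dv v g p - ∑ j, Dv v (h j) p := by
    intro v
    rw [Dv_sub v (diff_of_smooth hg) (Differentiable.fun_sum fun j _ => diff_of_smooth (hh j)) p,
      Dv_sum v _ (fun j => diff_of_smooth (hh j)) p]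
  have h2 : ∀ i : Fin (n+1), p.2 i * Dv (ex i) (fun q => g q - ∑ j, h j q) p
      = p.2 i * Dv (ex i) g p - ∑ j, p.2 i * Dv (ex i) (h j) p := by
    intro i
    rw [hd, mul_sub, Finset.mul_sum]
  have h3 : ∀ j : Fin (n+1), EulerA (h j) p
      = p.1 * Dv (e0 n) (h j) p + ∑ i, p.2 i * Dv (ex i) (h j) p := fun j => by rw [EulerA_eq]
  rw [hd, Finset.sum_congr rfl fun i _ => h2 i,
    Finset.sum_congr rfl fun j _ => h3 j, Finset.sum_add_distrib,
    Finset.sum_sub_distrib, Finset.sum_comm (γ := Fin (n+1)), mul_sub, Finset.mul_sum]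
  ring

lemma Lap_Euler {n : ℕ} {f : Amb n → ℝ} (hf : ContDiff ℝ (⊤:ℕ∞) f) :
    LapA (EulerA f) = fun p => EulerA (LapA f) p + 2 * LapA f p := by
  funext p
  rw [LapA_eq]
  simp only
  rw [Dv2_Euler (e0 n) hf p,
    Finset.sum_congr rfl (fun i (_ : i ∈ Finset.univ) => Dv2_Euler (ex i) hf p)]
  have hL : EulerA (LapA f) p
      = EulerA (Dv (e0 n) (Dv (e0 n) f)) p - ∑ j, EulerA (Dv (ex j) (Dv (ex j) f)) p := by
    rw [LapA_eq]
    exact Euler_sub_sum (Dv_smooth _ (Dv_smooth _ hf))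
      (fun j => Dv_smooth _ (Dv_smooth _ hf)) p
  rw [hL, LapA_eq]
  beta_reduce
  rw [Finset.sum_add_distrib, ← Finset.mul_sum]
  ring

lemma Dv2_cmul_add {n : ℕ} (v : Amb n) (a b : ℝ) {F G : Amb n → ℝ}
    (hF : ContDiff ℝ (⊤:ℕ∞) F) (hG : ContDiff ℝ (⊤:ℕ∞) G) (p : Amb n) :
    Dv v (Dv v (fun q => a * F q + b * G q)) p
      = a * Dv v (Dv v F) p + b * Dv v (Dv v G) p := by
  have h1 : Dv v (fun q => a * F q + b * G q) = fun q => a * Dv v F q + b * Dv v G q := by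
    funext q
    rw [Dv_add v ((diff_of_smooth hF).const_mul a) ((diff_of_smooth hG).const_mul b) q,
      Dv_const_mul v a (diff_of_smooth hF) q, Dv_const_mul v b (diff_of_smooth hG) q]
  rw [h1, Dv_add v ((Dv_diff v hF).const_mul a) ((Dv_diff v hG).const_mul b) p,
    Dv_const_mul v a (Dv_diff v hF) p, Dv_const_mul v b (Dv_diff v hG) p]

lemma Dv2_sub_cmul {n : ℕ} (v : Amb n) (c : ℝ) {F G : Amb n → ℝ}
    (hF : ContDiff ℝ (⊤:ℕ∞) F) (hG : ContDiff ℝ (⊤:ℕ∞) G) (p : Amb n) :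
    Dv v (Dv v (fun q => F q - c * G q)) p
      = Dv v (Dv v F) p - c * Dv v (Dv v G) p := by
  have h1 : Dv v (fun q => F q - c * G q) = fun q => Dv v F q - c * Dv v G q := by
    funext q
    rw [Dv_sub v (diff_of_smooth hF) ((diff_of_smooth hG).const_mul c) q,
      Dv_const_mul v c (diff_of_smooth hG) q]
  rw [h1, Dv_sub v (Dv_diff v hF) ((Dv_diff v hG).const_mul c) p,
    Dv_const_mul v c (Dv_diff v hG) p]

lemma LapA_cmul_add {n : ℕ} (a b : ℝ) {F G : Amb n → ℝ}
    (hF : ContDiff ℝ (⊤:ℕ∞) F) (hG : ContDiff ℝ (⊤:ℕ∞) G) :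
    LapA (fun q => a * F q + b * G q) = fun p => a * LapA F p + b * LapA G p := by
  funext p
  rw [LapA_eq, LapA_eq, LapA_eq]
  beta_reduce
  rw [Dv2_cmul_add (e0 n) a b hF hG p,
    Finset.sum_congr rfl (fun i (_ : i ∈ Finset.univ) => Dv2_cmul_add (ex i) a b hF hG p),
    Finset.sum_add_distrib, ← Finset.mul_sum, ← Finset.mul_sum]
  ring

lemma LapA_sub_cmul {n : ℕ} (c : ℝ) {F G : Amb n → ℝ}
    (hF : ContDiff ℝ (⊤:ℕ∞) F) (hG : ContDiff ℝ (⊤:ℕ∞) G) :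
    LapA (fun q => F q - c * G q) = fun p => LapA F p - c * LapA G p := by
  funext p
  rw [LapA_eq, LapA_eq, LapA_eq]
  beta_reduce
  rw [Dv2_sub_cmul (e0 n) c hF hG p,
    Finset.sum_congr rfl (fun i (_ : i ∈ Finset.univ) => Dv2_sub_cmul (ex i) c hF hG p),
    Finset.sum_sub_distrib, ← Finset.mul_sum]
  ring

lemma iter_cmul_add {n : ℕ} (k : ℕ) (a b : ℝ) {F G : Amb n → ℝ}
    (hF : ContDiff ℝ (⊤:ℕ∞) F) (hG : ContDiff ℝ (⊤:ℕ∞) G) :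
    LapA^[k] (fun q => a * F q + b * G q) = fun p => a * LapA^[k] F p + b * LapA^[k] G p := by
  induction k generalizing F G with
  | zero => rfl
  | succ m ih =>
    rw [Function.iterate_succ_apply, Function.iterate_succ_apply,
      Function.iterate_succ_apply, LapA_cmul_add a b hF hG]
    exact ih (smooth_LapA hF) (smooth_LapA hG)

lemma Lap_iter_Euler {n : ℕ} (k : ℕ) {f : Amb n → ℝ} (hf : ContDiff ℝ (⊤:ℕ∞) f) :
    LapA^[k] (EulerA f) = fun p => EulerA (LapA^[k] f) p + (2*(k:ℝ)) * LapA^[k] f p := by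
  induction k generalizing f with
  | zero => funext p; simp
  | succ m ih =>
    rw [Function.iterate_succ_apply, Lap_Euler hf]
    have h1 : (fun p => EulerA (LapA f) p + 2 * LapA f p)
        = fun q => 1 * EulerA (LapA f) q + 2 * LapA f q := by funext q; ring
    rw [h1, iter_cmul_add m 1 2 (smooth_Euler (smooth_LapA hf)) (smooth_LapA hf),
      ih (smooth_LapA hf)]
    funext p
    rw [← Function.iterate_succ_apply]
    push_cast
    ring

lemma main_ind {n : ℕ} (m : ℕ) {f : Amb n → ℝ} (hf : ContDiff ℝ (⊤:ℕ∞) f) :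
    LapA^[m+1] (fun q => QA q * f q)
      = fun p => QA p * LapA^[m+1] f p
        - (2*((m:ℝ)+1)) * (2 * EulerA (LapA^[m] f) p
            + ((n:ℝ) + 2*((m:ℝ)+1)) * LapA^[m] f p) := by
  induction m with
  | zero =>
    rw [Function.iterate_one, Lap_mul_Q hf]
    funext p
    simp only [Function.iterate_zero_apply, Function.iterate_one]
    push_cast
    ring
  | succ m ih =>
    rw [Function.iterate_succ_apply' LapA (m+1), ih, LapA_sub_cmul _
      (smooth_QA.mul (smooth_iter (m+1) hf))
      ((contDiff_const.mul (smooth_Euler (smooth_iter m hf))).add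
        (contDiff_const.mul (smooth_iter m hf))),
      Lap_mul_Q (smooth_iter (m+1) hf),
      LapA_cmul_add 2 ((n:ℝ) + 2*((m:ℝ)+1)) (smooth_Euler (smooth_iter m hf)) (smooth_iter m hf),
      Lap_Euler (smooth_iter m hf)]
    funext p
    rw [← Function.iterate_succ_apply' LapA m, ← Function.iterate_succ_apply' LapA (m+1)]
    push_cast
    ring


/-- GJMS sl₂-commutator identity, paper's eqn (2.3): for every `k ≥ 1`
and smooth `f`, `Δ̃^k(Q·f) − Q·Δ̃^k f = −2k·Δ̃^{k−1}(2·Xf + (n+4−2k)·f)`. -/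
theorem stmt_7 (n k : ℕ) (hn : 1 ≤ n) (hk : 1 ≤ k)
    (f : Amb n → ℝ) (hf : ContDiff ℝ (⊤ : ℕ∞) f) (p : Amb n) :
    LapA^[k] (fun q => QA q * f q) p - QA p * LapA^[k] f p
      = -(2*(k:ℝ)) * LapA^[k-1] (fun q => 2 * EulerA f q + ((n:ℝ) + 4 - 2*(k:ℝ)) * f q) p := by
  obtain ⟨m, rfl⟩ : ∃ m, k = m + 1 := ⟨k - 1, (Nat.succ_pred_eq_of_pos hk).symm⟩
  rw [main_ind m hf, Nat.add_sub_cancel,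
    iter_cmul_add m 2 ((n:ℝ) + 4 - 2*((m:ℕ)+1:ℕ)) (smooth_Euler hf) hf,
    Lap_iter_Euler m hf]
  push_cast
  ring
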